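/- Fix an integer K ≥ 2 and real numbers N > 0 and N_fd ≥ 0, and let H_K = 1 + 1/2 + … + 1/K. Then the inequality K·(N − (K−1)(H_K − 1)) / (H_K · N) ≤ K·(1 − (N_fd + K − 1)/N) holds if and only if N ≥ (H_K · N_fd + K − 1) / (H_K − 1). That is, the maximum net DoF of zero-forcing is at least the maximum net DoF of the K-user MAT scheme exactly when the coherence time satisfies N ≥ (H_K N_fd + K − 1)/(H_K − 1). -/

import Mathlib

/-- The K-th harmonic number `H_K = 1 + 1/2 + … + 1/K`. -/
noncomputable def harmonicNumber (K : ℕ) : ℝ := ∑ i ∈ Finset.range K, (1 : ℝ) / (i + 1)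

lemma harmonic_gt_one {K : ℕ} (hK : 2 ≤ K) : 1 < harmonicNumber K := by
  have h2 : harmonicNumber 2 ≤ harmonicNumber K := by
    apply Finset.sum_le_sum_of_subset_of_nonneg
    · exact Finset.range_subset_range.mpr hK
    · intro i _ _; positivity
  have : harmonicNumber 2 = 3/2 := by
    simp [harmonicNumber, Finset.sum_range_succ]; norm_num
  linarith

/-- For `K ≥ 2`, `N > 0`, `Nfd ≥ 0`, the maximum net DoF `K(N - (K-1)(H_K-1))/(H_K N)` of
the K-user MAT scheme is at most the maximum net DoF `K(1 - (Nfd + K - 1)/N)` of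
zero-forcing iff `N ≥ (H_K Nfd + K - 1)/(H_K - 1)`. -/
theorem stmt_16 (K : ℕ) (hK : 2 ≤ K) (N Nfd : ℝ) (hN : 0 < N) (hNfd : 0 ≤ Nfd) :
    (K : ℝ) * (N - ((K : ℝ) - 1) * (harmonicNumber K - 1)) / (harmonicNumber K * N)
        ≤ (K : ℝ) * (1 - (Nfd + (K : ℝ) - 1) / N) ↔
      N ≥ (harmonicNumber K * Nfd + (K : ℝ) - 1) / (harmonicNumber K - 1) := by
  have hH : 1 < harmonicNumber K := harmonic_gt_one hK
  have hK' : (2 : ℝ) ≤ (K : ℝ) := by exact_mod_cast hK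
  set H := harmonicNumber K with hHdef
  have hHN : 0 < H * N := by positivity
  have hH1 : 0 < H - 1 := by linarith
  rw [div_le_iff₀ hHN, ge_iff_le, div_le_iff₀ hH1]
  have hK0 : (0 : ℝ) < (K : ℝ) := by linarith
  have hexp : (K : ℝ) * (1 - (Nfd + (K : ℝ) - 1) / N) * (H * N)
      = (K : ℝ) * (N - (Nfd + (K : ℝ) - 1)) * H := by
    field_simp
  rw [hexp]
  constructor
  · intro h
    nlinarith [hK0]
  · intro h
    nlinarith [mul_le_mul_of_nonneg_left h hK0.le]
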